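/- arXiv:1704.08730 — 2 statements merged into one kernel-verified Lean document; each statement's English description precedes it below -/
import Mathlib

section
/- Let c₁ ≥ -1, c₂ ≥ -1, and c₃ < c̄₃(c₁,c₂). Then the ODE (★) has no C¹ solution on (-1,1). -/
open Set Filter Real Topology

noncomputable section

/-- The Riccati-type ODE (★):
`(1-x²)U'(x) + 2x·U(x) + (1/2)U(x)² = c₁(1-x) + c₂(1+x) + c₃(1-x²)` at the point `x`. -/
def StarEq (c₁ c₂ c₃ : ℝ) (U : ℝ → ℝ) (x : ℝ) : Prop :=
  (1 - x ^ 2) * deriv U x + 2 * x * U x + (1 / 2) * (U x) ^ 2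
    = c₁ * (1 - x) + c₂ * (1 + x) + c₃ * (1 - x ^ 2)

/-- `U` is a C¹ solution of (★) on the set `s`. -/
def IsSolOn (c₁ c₂ c₃ : ℝ) (U : ℝ → ℝ) (s : Set ℝ) : Prop :=
  ContDiffOn ℝ 1 U s ∧ ∀ x ∈ s, StarEq c₁ c₂ c₃ U x

/-- `c̄₃(c₁,c₂) = -(1/2)(√(1+c₁)+√(1+c₂))(√(1+c₁)+√(1+c₂)+2)`. -/
def cbar (c₁ c₂ : ℝ) : ℝ :=
  -(1 / 2) * (Real.sqrt (1 + c₁) + Real.sqrt (1 + c₂)) *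
    (Real.sqrt (1 + c₁) + Real.sqrt (1 + c₂) + 2)

/-- `J = {c ∈ ℝ³ : c₁ ≥ -1, c₂ ≥ -1, c₃ ≥ c̄₃(c₁,c₂)}`. -/
def Jset : Set (ℝ × ℝ × ℝ) := {c | -1 ≤ c.1 ∧ -1 ≤ c.2.1 ∧ cbar c.1 c.2.1 ≤ c.2.2}

def tau1 (c₁ : ℝ) : ℝ := 2 - 2 * Real.sqrt (1 + c₁)
def tau2 (c₁ : ℝ) : ℝ := 2 + 2 * Real.sqrt (1 + c₁)
def tau1' (c₂ : ℝ) : ℝ := -2 - 2 * Real.sqrt (1 + c₂)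
def tau2' (c₂ : ℝ) : ℝ := -2 + 2 * Real.sqrt (1 + c₂)

lemma keyDeriv (c₁ c₂ c₃ p q ε : ℝ) (U : ℝ → ℝ) {x : ℝ}
    (hx1 : (0:ℝ) < 1 + x) (hx2 : (0:ℝ) < 1 - x)
    (hpsq : p ^ 2 = 1 + c₁) (hqsq : q ^ 2 = 1 + c₂)
    (hε : ε = -(1/2) * (p + q) * (p + q + 2) - c₃)
    (hU : HasDerivAt U (deriv U x) x)
    (hstar : StarEq c₁ c₂ c₃ U x) :
    HasDerivAt (fun y => (1+y) ^ p * (1-y) ^ q * (U y - ((1+p)*(1-y) - (1+q)*(1+y))))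
      (-ε * ((1+x) ^ p * (1-x) ^ q)
        - (1+x) ^ p * (1-x) ^ q * (U x - ((1+p)*(1-x) - (1+q)*(1+x))) ^ 2 / (2*(1-x^2))) x := by
  have hA : HasDerivAt (fun y : ℝ => (1+y) ^ p) (1 * p * (1+x) ^ (p-1)) x :=
    (HasDerivAt.rpow_const ((hasDerivAt_id x).const_add 1) (Or.inl hx1.ne'))
  have hB : HasDerivAt (fun y : ℝ => (1-y) ^ q) ((-1) * q * (1-x) ^ (q-1)) x :=
    (HasDerivAt.rpow_const ((hasDerivAt_id x).const_sub 1) (Or.inl hx2.ne'))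
  have hV : HasDerivAt (fun y : ℝ => (1+p)*(1-y) - (1+q)*(1+y)) ((1+p)*(-1) - (1+q)*1) x :=
    (((hasDerivAt_id x).const_sub 1).const_mul (1+p)).sub
      (((hasDerivAt_id x).const_add 1).const_mul (1+q))
  have hZ := (hA.mul hB).mul (hU.sub hV)
  have hxx : (0:ℝ) < 1 - x ^ 2 := by nlinarith
  have hu' : deriv U x
      = (c₁*(1-x) + c₂*(1+x) + c₃*(1-x^2) - 2*x*U x - (1/2)*(U x)^2) / (1-x^2) := by
    rw [eq_div_iff hxx.ne']
    unfold StarEq at hstar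
    linarith [hstar]
  have hc1 : c₁ = p ^ 2 - 1 := by linarith
  have hc2 : c₂ = q ^ 2 - 1 := by linarith
  refine hZ.congr_deriv ?_
  simp only [Pi.mul_apply, Pi.sub_apply]
  rw [hu', Real.rpow_sub_one hx1.ne', Real.rpow_sub_one hx2.ne', hc1, hc2, hε]
  have hAp : (0:ℝ) < (1+x) ^ p := Real.rpow_pos_of_pos hx1 p
  have hBp : (0:ℝ) < (1-x) ^ q := Real.rpow_pos_of_pos hx2 q
  field_simp
  ring

lemma derivG_nonneg (ε μv Wv C s t : ℝ) (hμ : 0 < μv) (hW : Wv ≠ 0) (ht : 0 < t)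
    (hε : 0 ≤ ε) (hs : 0 < s) (hbound : 2 * s * μv * C ≤ t) :
    0 ≤ -(-ε * μv - μv * Wv ^ 2 / (2 * s)) / (μv * Wv) ^ 2 - C * (1 / t) := by
  have h1 : -(-ε * μv - μv * Wv ^ 2 / (2 * s)) / (μv * Wv) ^ 2
      = ε / (μv * Wv ^ 2) + 1 / (2 * s * μv) := by
    field_simp
    ring
  have h2 : C * (1 / t) ≤ 1 / (2 * s * μv) := by
    rw [mul_one_div, div_le_div_iff₀ ht (by positivity)]
    nlinarith [hbound]
  have h3 : 0 ≤ ε / (μv * Wv ^ 2) := by positivity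
  rw [h1]
  linarith

set_option maxHeartbeats 1000000 in
/-- no C¹ solution on (-1,1) when `c₃ < c̄₃(c₁,c₂)`. -/
theorem statement17 (c₁ c₂ c₃ : ℝ) (h1 : -1 ≤ c₁) (h2 : -1 ≤ c₂) (h3 : c₃ < cbar c₁ c₂) :
    ¬ ∃ U : ℝ → ℝ, IsSolOn c₁ c₂ c₃ U (Ioo (-1 : ℝ) 1) := by
  rintro ⟨U, hC1, hEq⟩
  set p := Real.sqrt (1 + c₁) with hpdef
  set q := Real.sqrt (1 + c₂) with hqdef
  have hp0 : 0 ≤ p := Real.sqrt_nonneg _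
  have hq0 : 0 ≤ q := Real.sqrt_nonneg _
  have hpsq : p ^ 2 = 1 + c₁ := Real.sq_sqrt (by linarith)
  have hqsq : q ^ 2 = 1 + c₂ := Real.sq_sqrt (by linarith)
  set ε := cbar c₁ c₂ - c₃ with hεdef
  have hεpos : 0 < ε := by rw [hεdef]; linarith
  have hε : ε = -(1/2) * (p + q) * (p + q + 2) - c₃ := by
    rw [hεdef]; unfold cbar; ring
  set Z : ℝ → ℝ := fun y => (1+y) ^ p * (1-y) ^ q * (U y - ((1+p)*(1-y) - (1+q)*(1+y)))
    with hZdef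
  set Zd : ℝ → ℝ := fun y => -ε * ((1+y) ^ p * (1-y) ^ q)
      - (1+y) ^ p * (1-y) ^ q * (U y - ((1+p)*(1-y) - (1+q)*(1+y))) ^ 2 / (2*(1-y^2))
    with hZddef
  have key : ∀ x ∈ Ioo (-1:ℝ) 1, HasDerivAt Z (Zd x) x := by
    intro x hx
    have hx1 : (0:ℝ) < 1 + x := by have := hx.1; linarith
    have hx2 : (0:ℝ) < 1 - x := by have := hx.2; linarith
    have hUd : DifferentiableAt ℝ U x :=
      (hC1.differentiableOn one_ne_zero).differentiableAt (Ioo_mem_nhds hx.1 hx.2)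
    simp only [hZdef, hZddef]
    exact keyDeriv c₁ c₂ c₃ p q ε U hx1 hx2 hpsq hqsq hε hUd.hasDerivAt (hEq x hx)
  have hZcont : ContinuousOn Z (Ioo (-1:ℝ) 1) := fun x hx =>
    (key x hx).continuousAt.continuousWithinAt
  have hZanti : StrictAntiOn Z (Ioo (-1:ℝ) 1) := by
    apply strictAntiOn_of_deriv_neg (convex_Ioo _ _) hZcont
    intro x hx
    rw [interior_Ioo] at hx
    rw [(key x hx).deriv]
    have hx1 : (0:ℝ) < 1 + x := by have := hx.1; linarith
    have hx2 : (0:ℝ) < 1 - x := by have := hx.2; linarith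
    have hxx : (0:ℝ) < 1 - x ^ 2 := by nlinarith
    have hμ : (0:ℝ) < (1+x) ^ p * (1-x) ^ q := by positivity
    have hsq : (0:ℝ) ≤ (1+x) ^ p * (1-x) ^ q
        * (U x - ((1+p)*(1-x) - (1+q)*(1+x))) ^ 2 / (2*(1-x^2)) := by positivity
    simp only [hZddef]
    nlinarith [mul_pos hεpos hμ]
  have h0mem : (0:ℝ) ∈ Ioo (-1:ℝ) 1 := by norm_num
  rcases lt_or_ge 0 (Z 0) with hZ0 | hZ0
  · -- Case 1 : Z 0 > 0, contradiction near -1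
    set C := ((2:ℝ) ^ (q+2))⁻¹ with hCdef
    have h2q : (0:ℝ) < (2:ℝ) ^ (q+2) := Real.rpow_pos_of_pos (by norm_num) _
    have hCpos : 0 < C := by positivity
    set x₁ := Real.exp (-((Z 0)⁻¹ + 1)/C) - 1 with hx₁def
    have hZ0inv : 0 < (Z 0)⁻¹ := inv_pos.mpr hZ0
    have hx₁mem : x₁ ∈ Ioo (-1:ℝ) (0:ℝ) := by
      constructor
      · have := Real.exp_pos (-((Z 0)⁻¹ + 1)/C); rw [hx₁def]; linarith
      · have hneg : -((Z 0)⁻¹ + 1)/C < 0 := div_neg_of_neg_of_pos (by linarith) hCpos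
        have := Real.exp_lt_one_iff.mpr hneg
        rw [hx₁def]; linarith
    have hIccsub : Icc x₁ (0:ℝ) ⊆ Ioo (-1:ℝ) 1 := fun y hy =>
      ⟨lt_of_lt_of_le hx₁mem.1 hy.1, lt_of_le_of_lt hy.2 one_pos⟩
    have hZpos : ∀ y ∈ Icc x₁ (0:ℝ), 0 < Z y := by
      intro y hy
      rcases eq_or_lt_of_le hy.2 with h | h
      · rw [h]; exact hZ0
      · exact lt_trans hZ0 (hZanti (hIccsub hy) h0mem h)
    set G : ℝ → ℝ := fun y => (Z y)⁻¹ - C * Real.log (1+y) with hGdef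
    have hGderiv : ∀ y ∈ Icc x₁ (0:ℝ),
        HasDerivAt G (-(Zd y) / (Z y) ^ 2 - C * (1 / (1+y))) y := by
      intro y hy
      have hy1 : (0:ℝ) < 1 + y := by have := (hIccsub hy).1; linarith
      exact ((key y (hIccsub hy)).inv (hZpos y hy).ne').sub
        ((((hasDerivAt_id y).const_add 1).log hy1.ne').const_mul C)
    have hGmono : MonotoneOn G (Icc x₁ (0:ℝ)) := by
      apply monotoneOn_of_deriv_nonneg (convex_Icc _ _)
      · exact fun y hy => (hGderiv y hy).continuousAt.continuousWithinAt
      · exact fun y hy =>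
          ((hGderiv y (interior_subset hy)).differentiableAt).differentiableWithinAt
      · intro y hy
        rw [interior_Icc] at hy
        have hymem := hIccsub (Ioo_subset_Icc_self hy)
        have hy1 : (0:ℝ) < 1 + y := by have := hymem.1; linarith
        have hy2 : (0:ℝ) < 1 - y := by have := hymem.2; linarith
        have hyneg : y < 0 := hy.2
        have hs : (0:ℝ) < 1 - y ^ 2 := by nlinarith
        have hμ : (0:ℝ) < (1+y) ^ p * (1-y) ^ q := by positivity
        have hW : U y - ((1+p)*(1-y) - (1+q)*(1+y)) ≠ 0 := by
          intro h
          have : Z y = 0 := by simp only [hZdef]; rw [h, mul_zero]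
          exact (hZpos y (Ioo_subset_Icc_self hy)).ne' this
        have hbound : 2 * (1 - y^2) * ((1+y) ^ p * (1-y) ^ q) * C ≤ 1 + y := by
          have e1 : (1+y) ^ p ≤ 1 := Real.rpow_le_one hy1.le (by linarith) hp0
          have e2 : (1-y) ^ q ≤ 2 ^ q :=
            Real.rpow_le_rpow hy2.le (by linarith) hq0
          have hab : (1+y) ^ p * (1-y) ^ q ≤ 2 ^ q := by
            calc (1+y) ^ p * (1-y) ^ q ≤ 1 * (2 ^ q) :=
                  mul_le_mul e1 e2 (Real.rpow_pos_of_pos hy2 q).le zero_le_one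
              _ = 2 ^ q := one_mul _
          have e3 : (2:ℝ) ^ (q+2) = 2 ^ q * 4 := by
            rw [show (q + 2 : ℝ) = q + ((2:ℕ):ℝ) by norm_num,
              Real.rpow_add (by norm_num : (0:ℝ) < 2), Real.rpow_natCast]
            norm_num
          have hmain : 2 * (1 - y^2) * ((1+y) ^ p * (1-y) ^ q) ≤ (1+y) * (2 ^ q * 4) := by
            have h5 : (1-y) * ((1+y) ^ p * (1-y) ^ q) ≤ 2 * 2 ^ q :=
              mul_le_mul (by linarith) hab (by positivity) (by norm_num)
            calc 2 * (1 - y^2) * ((1+y) ^ p * (1-y) ^ q)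
                = 2 * (1+y) * ((1-y) * ((1+y) ^ p * (1-y) ^ q)) := by ring
              _ ≤ 2 * (1+y) * (2 * 2 ^ q) :=
                  mul_le_mul_of_nonneg_left h5 (by linarith)
              _ = (1+y) * (2 ^ q * 4) := by ring
          calc 2 * (1 - y^2) * ((1+y) ^ p * (1-y) ^ q) * C
              ≤ (1+y) * (2 ^ q * 4) * C := mul_le_mul_of_nonneg_right hmain hCpos.le
            _ ≤ 1 + y := by
                rw [hCdef, e3]
                rw [mul_inv_le_iff₀ (by positivity)]
        rw [(hGderiv y (Ioo_subset_Icc_self hy)).deriv]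
        have := derivG_nonneg ε ((1+y) ^ p * (1-y) ^ q)
          (U y - ((1+p)*(1-y) - (1+q)*(1+y))) C (1 - y^2) (1+y)
          hμ hW hy1 hεpos.le hs hbound
        simp only [hZddef, hZdef]
        exact this
    have hx₁Icc : x₁ ∈ Icc x₁ (0:ℝ) := left_mem_Icc.mpr hx₁mem.2.le
    have h0Icc : (0:ℝ) ∈ Icc x₁ (0:ℝ) := right_mem_Icc.mpr hx₁mem.2.le
    have hmono := hGmono hx₁Icc h0Icc hx₁mem.2.le
    have hG0 : G 0 = (Z 0)⁻¹ := by
      simp only [hGdef]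
      norm_num
    have h6 : ∀ a : ℝ, C * (a / C) = a := fun a => by
      rw [mul_comm, div_mul_cancel₀ _ hCpos.ne']
    have hlog1 : Real.log (1 + x₁) = (-((Z 0)⁻¹ + 1))/C := by
      rw [hx₁def,
        show (1 + (Real.exp (-((Z 0)⁻¹ + 1)/C) - 1)) = Real.exp (-((Z 0)⁻¹ + 1)/C) by ring,
        Real.log_exp]
    have hGx₁ : G x₁ = (Z x₁)⁻¹ + ((Z 0)⁻¹ + 1) := by
      simp only [hGdef]
      rw [hlog1, h6]
      ring
    have hZx₁inv : 0 < (Z x₁)⁻¹ := inv_pos.mpr (hZpos x₁ hx₁Icc)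
    rw [hGx₁, hG0] at hmono
    linarith
  · -- Case 2 : Z 0 ≤ 0, contradiction near 1
    have hhalf : (1/2:ℝ) ∈ Ioo (-1:ℝ) 1 := by norm_num
    have hzneg : Z (1/2) < 0 := lt_of_lt_of_le (hZanti h0mem hhalf (by norm_num)) hZ0
    set C := ((2:ℝ) ^ (p+2))⁻¹ with hCdef
    have h2p : (0:ℝ) < (2:ℝ) ^ (p+2) := Real.rpow_pos_of_pos (by norm_num) _
    have hCpos : 0 < C := by positivity
    have hzinv : (Z (1/2))⁻¹ < 0 := inv_lt_zero.mpr hzneg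
    set x₂ := 1 - (1/2) * Real.exp (((Z (1/2))⁻¹ - 1)/C) with hx₂def
    have hexppos := Real.exp_pos (((Z (1/2))⁻¹ - 1)/C)
    have hexp1 : Real.exp (((Z (1/2))⁻¹ - 1)/C) < 1 :=
      Real.exp_lt_one_iff.mpr (div_neg_of_neg_of_pos (by linarith) hCpos)
    have hx₂mem : x₂ ∈ Ioo (1/2:ℝ) 1 := by
      rw [Set.mem_Ioo, hx₂def]
      constructor <;> linarith
    have hIccsub : Icc (1/2:ℝ) x₂ ⊆ Ioo (-1:ℝ) 1 := by
      intro y hy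
      rw [Set.mem_Icc] at hy
      rw [Set.mem_Ioo]
      exact ⟨by linarith [hy.1], lt_of_le_of_lt hy.2 hx₂mem.2⟩
    have hZneg : ∀ y ∈ Icc (1/2:ℝ) x₂, Z y < 0 := by
      intro y hy
      rcases eq_or_lt_of_le hy.1 with h | h
      · rw [← h]; exact hzneg
      · exact lt_trans (hZanti hhalf (hIccsub hy) h) hzneg
    set G : ℝ → ℝ := fun y => (Z y)⁻¹ + C * Real.log (1-y) with hGdef
    have hGderiv : ∀ y ∈ Icc (1/2:ℝ) x₂,
        HasDerivAt G (-(Zd y) / (Z y) ^ 2 - C * (1 / (1-y))) y := by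
      intro y hy
      have hy2 : (0:ℝ) < 1 - y := by have := (hIccsub hy).2; linarith
      have h := ((key y (hIccsub hy)).inv (hZneg y hy).ne).add
        ((((hasDerivAt_id y).const_sub 1).log hy2.ne').const_mul C)
      simp only [id_eq] at h
      rw [show -(Zd y) / (Z y) ^ 2 + C * (-1 / (1-y))
          = -(Zd y) / (Z y) ^ 2 - C * (1 / (1-y)) by ring] at h
      exact h
    have hGmono : MonotoneOn G (Icc (1/2:ℝ) x₂) := by
      apply monotoneOn_of_deriv_nonneg (convex_Icc _ _)
      · exact fun y hy => (hGderiv y hy).continuousAt.continuousWithinAt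
      · exact fun y hy =>
          ((hGderiv y (interior_subset hy)).differentiableAt).differentiableWithinAt
      · intro y hy
        rw [interior_Icc] at hy
        have hymem := hIccsub (Ioo_subset_Icc_self hy)
        have hy1 : (0:ℝ) < 1 + y := by have := hymem.1; linarith
        have hy2 : (0:ℝ) < 1 - y := by have := hymem.2; linarith
        have hypos : 0 < y := lt_trans (by norm_num) hy.1
        have hs : (0:ℝ) < 1 - y ^ 2 := by nlinarith
        have hμ : (0:ℝ) < (1+y) ^ p * (1-y) ^ q := by positivity
        have hW : U y - ((1+p)*(1-y) - (1+q)*(1+y)) ≠ 0 := by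
          intro h
          have : Z y = 0 := by simp only [hZdef]; rw [h, mul_zero]
          exact (hZneg y (Ioo_subset_Icc_self hy)).ne this
        have hbound : 2 * (1 - y^2) * ((1+y) ^ p * (1-y) ^ q) * C ≤ 1 - y := by
          have e1 : (1-y) ^ q ≤ 1 := Real.rpow_le_one hy2.le (by linarith) hq0
          have e2 : (1+y) ^ p ≤ 2 ^ p :=
            Real.rpow_le_rpow hy1.le (by linarith) hp0
          have hab : (1+y) ^ p * (1-y) ^ q ≤ 2 ^ p := by
            calc (1+y) ^ p * (1-y) ^ q ≤ 2 ^ p * 1 :=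
                  mul_le_mul e2 e1 (Real.rpow_pos_of_pos hy2 q).le (by positivity)
              _ = 2 ^ p := mul_one _
          have e3 : (2:ℝ) ^ (p+2) = 2 ^ p * 4 := by
            rw [show (p + 2 : ℝ) = p + ((2:ℕ):ℝ) by norm_num,
              Real.rpow_add (by norm_num : (0:ℝ) < 2), Real.rpow_natCast]
            norm_num
          have hmain : 2 * (1 - y^2) * ((1+y) ^ p * (1-y) ^ q) ≤ (1-y) * (2 ^ p * 4) := by
            have h5 : (1+y) * ((1+y) ^ p * (1-y) ^ q) ≤ 2 * 2 ^ p :=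
              mul_le_mul (by linarith) hab (by positivity) (by norm_num)
            calc 2 * (1 - y^2) * ((1+y) ^ p * (1-y) ^ q)
                = 2 * (1-y) * ((1+y) * ((1+y) ^ p * (1-y) ^ q)) := by ring
              _ ≤ 2 * (1-y) * (2 * 2 ^ p) :=
                  mul_le_mul_of_nonneg_left h5 (by linarith)
              _ = (1-y) * (2 ^ p * 4) := by ring
          calc 2 * (1 - y^2) * ((1+y) ^ p * (1-y) ^ q) * C
              ≤ (1-y) * (2 ^ p * 4) * C := mul_le_mul_of_nonneg_right hmain hCpos.le
            _ ≤ 1 - y := by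
                rw [hCdef, e3]
                rw [mul_inv_le_iff₀ (by positivity)]
        rw [(hGderiv y (Ioo_subset_Icc_self hy)).deriv]
        have := derivG_nonneg ε ((1+y) ^ p * (1-y) ^ q)
          (U y - ((1+p)*(1-y) - (1+q)*(1+y))) C (1 - y^2) (1-y)
          hμ hW hy2 hεpos.le hs hbound
        simp only [hZddef, hZdef]
        exact this
    have hhIcc : (1/2:ℝ) ∈ Icc (1/2:ℝ) x₂ := left_mem_Icc.mpr hx₂mem.1.le
    have hx₂Icc : x₂ ∈ Icc (1/2:ℝ) x₂ := right_mem_Icc.mpr hx₂mem.1.le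
    have hmono := hGmono hhIcc hx₂Icc hx₂mem.1.le
    have hGh : G (1/2:ℝ) = (Z (1/2))⁻¹ + C * Real.log (1/2) := by
      simp only [hGdef]
      norm_num
    have h6 : ∀ a : ℝ, C * (a / C) = a := fun a => by
      rw [mul_comm, div_mul_cancel₀ _ hCpos.ne']
    have hlog2 : Real.log (1 - x₂) = Real.log (1/2) + ((Z (1/2))⁻¹ - 1)/C := by
      rw [hx₂def,
        show (1 - (1 - (1/2) * Real.exp (((Z (1/2))⁻¹ - 1)/C)))
          = (1/2) * Real.exp (((Z (1/2))⁻¹ - 1)/C) by ring,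
        Real.log_mul (by norm_num) (Real.exp_ne_zero _), Real.log_exp]
    have hGx₂ : G x₂ = (Z x₂)⁻¹ + C * Real.log (1/2) + ((Z (1/2))⁻¹ - 1) := by
      simp only [hGdef]
      rw [hlog2, mul_add, h6]
      ring
    have hZx₂inv : (Z x₂)⁻¹ < 0 := inv_lt_zero.mpr (hZneg x₂ hx₂Icc)
    rw [hGh, hGx₂] at hmono
    linarith
end
end

section
/- Let c = (c₁,c₂,c₃) ∈ ℝ³ with c₁ > -1, and let U be a C¹ solution of (★) on (-1,1) with lim_{x→-1⁺} U(x) = τ₁(c₁). Then for every ε > 0 there exist constants δ > 0 and C > 0 such that |U(x) - τ₁(c₁)| ≤ C·(1+x)^{min(√(1+c₁),1) - ε} for all x ∈ (-1,-1+δ). -/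
open Set Filter Real Topology
set_option maxHeartbeats 800000

noncomputable section

lemma noCross (F : ℝ → ℝ) (a b : ℝ) (hab : a ≤ b)
    (hcont : ContinuousOn F (Icc a b))
    (hd : ∀ x ∈ Ico a b, 0 ≤ F x → ∃ d, 0 < d ∧ HasDerivAt F d x)
    (hb : F b ≤ 0) : F a ≤ 0 := by
  by_contra h
  push_neg at h
  have hab' : a < b := by
    rcases eq_or_lt_of_le hab with rfl | h'
    · exact absurd hb (not_le.2 h)
    · exact h'
  set S := Icc a b ∩ F ⁻¹' (Iic 0) with hS
  have hSne : S.Nonempty := ⟨b, ⟨right_mem_Icc.2 hab, hb⟩⟩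
  have hSclosed : IsClosed S :=
    hcont.preimage_isClosed_of_isClosed isClosed_Icc isClosed_Iic
  have hSbd : BddBelow S := ⟨a, fun x hx => hx.1.1⟩
  set x₁ := sInf S with hx₁
  have hx₁S : x₁ ∈ S := hSclosed.csInf_mem hSne hSbd
  have hax₁' : a ≤ x₁ := le_csInf hSne fun x hx => hx.1.1
  have hax₁ : a < x₁ := by
    rcases eq_or_lt_of_le hax₁' with h' | h'
    · exact absurd hx₁S.2 (by rw [← h']; exact not_le.2 h)
    · exact h'
  have hx₁b : x₁ ≤ b := hx₁S.1.2
  have hpos : ∀ x ∈ Ioo a x₁, 0 < F x := by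
    intro x hx
    by_contra hc
    exact absurd (csInf_le hSbd ⟨⟨hx.1.le, hx.2.le.trans hx₁b⟩, le_of_not_gt hc⟩)
      (not_le.2 hx.2)
  have hmono : StrictMonoOn F (Icc a x₁) := by
    apply strictMonoOn_of_deriv_pos (convex_Icc a x₁)
      (hcont.mono (Icc_subset_Icc le_rfl hx₁b))
    intro x hx
    rw [interior_Icc] at hx
    obtain ⟨d, hd0, hD⟩ := hd x ⟨hx.1.le, lt_of_lt_of_le hx.2 hx₁b⟩ (hpos x hx).le
    rw [hD.deriv]; exact hd0
  have := hmono (left_mem_Icc.2 hax₁.le) (right_mem_Icc.2 hax₁.le) hax₁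
  have h2 : F x₁ ≤ 0 := hx₁S.2
  linarith

lemma derivU (c₁ c₂ c₃ : ℝ) (U : ℝ → ℝ) (hU : IsSolOn c₁ c₂ c₃ U (Ioo (-1:ℝ) 1))
    (x : ℝ) (hx : x ∈ Ioo (-1:ℝ) 1) :
    HasDerivAt U ((c₁*(1-x) + c₂*(1+x) + c₃*(1-x^2) - 2*x*U x - (1/2)*(U x)^2)/((1+x)*(1-x))) x := by
  have hx1 : (0:ℝ) < 1 + x := by linarith [hx.1]
  have hx2 : (0:ℝ) < 1 - x := by linarith [hx.2]
  have hdiff : DifferentiableAt ℝ U x :=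
    ((hU.1.differentiableOn one_ne_zero) x hx).differentiableAt (Ioo_mem_nhds hx.1 hx.2)
  have heq := hU.2 x hx
  unfold StarEq at heq
  have hne : (1+x)*(1-x) ≠ 0 := by positivity
  have : deriv U x = (c₁*(1-x)+c₂*(1+x)+c₃*(1-x^2) - 2*x*U x - (1/2)*(U x)^2)/((1+x)*(1-x)) := by
    rw [eq_div_iff hne]
    linear_combination heq
  rw [← this]; exact hdiff.hasDerivAt

/-- Hölder-type rate of convergence to `τ₁(c₁)` at `-1` when `c₁ > -1`. -/
theorem statement18 (c₁ c₂ c₃ : ℝ) (h1 : -1 < c₁) (U : ℝ → ℝ)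
    (hU : IsSolOn c₁ c₂ c₃ U (Ioo (-1 : ℝ) 1))
    (hlim : Tendsto U (𝓝[>] (-1 : ℝ)) (𝓝 (tau1 c₁))) :
    ∀ ε : ℝ, 0 < ε → ∃ δ : ℝ, 0 < δ ∧ ∃ C : ℝ, 0 < C ∧
      ∀ x ∈ Ioo (-1 : ℝ) (-1 + δ),
        |U x - tau1 c₁| ≤ C * (1 + x) ^ (min (Real.sqrt (1 + c₁)) 1 - ε) := by
  intro ε hε
  obtain ⟨s, hsdef⟩ : ∃ s : ℝ, s = Real.sqrt (1 + c₁) := ⟨_, rfl⟩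
  rw [← hsdef]
  have hc1 : (0:ℝ) < 1 + c₁ := by linarith
  have hs0 : 0 < s := hsdef ▸ Real.sqrt_pos.2 hc1
  have hs2 : s ^ 2 = 1 + c₁ := hsdef ▸ Real.sq_sqrt hc1.le
  have htau : tau1 c₁ = 2 - 2 * s := by rw [hsdef]; rfl
  obtain ⟨α, hαdef⟩ : ∃ α : ℝ, α = min s 1 - ε := ⟨_, rfl⟩
  rw [← hαdef]
  by_cases hα0 : 0 < α
  swap
  · -- easy case : α ≤ 0
    push_neg at hα0
    have h1' : ∀ᶠ x in 𝓝[>] (-1:ℝ), U x ∈ Metric.closedBall (tau1 c₁) 1 :=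
      hlim (Metric.closedBall_mem_nhds _ one_pos)
    rw [Filter.eventually_iff, mem_nhdsGT_iff_exists_Ioo_subset] at h1'
    obtain ⟨u, hu, hsub⟩ := h1'
    have hu' : (-1:ℝ) < u := mem_Ioi.mp hu
    refine ⟨min ((u+1)/2) 1, lt_min (by linarith) one_pos, 1, one_pos, ?_⟩
    intro x hx
    have hxu : x ∈ Ioo (-1:ℝ) u := by
      refine ⟨hx.1, ?_⟩
      have h2 : min ((u+1)/2) 1 ≤ (u+1)/2 := min_le_left _ _
      have := hx.2
      linarith
    have hb := hsub hxu
    simp only [mem_setOf_eq, Metric.mem_closedBall, Real.dist_eq] at hb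
    have hx1 : 0 < 1 + x := by linarith [hx.1]
    have hx2 : 1 + x ≤ 1 := by
      have h2 : min ((u+1)/2) 1 ≤ 1 := min_le_right _ _
      have := hx.2
      linarith
    have hge : (1:ℝ) ≤ (1+x) ^ α :=
      Real.one_le_rpow_of_pos_of_le_one_of_nonpos hx1 hx2 hα0
    calc |U x - tau1 c₁| ≤ 1 := hb
    _ ≤ 1 * (1+x) ^ α := by linarith
  · -- main case
    have hαs : α < s := by
      have h := min_le_left s 1; rw [hαdef]; linarith
    have hα1 : α < 1 := by
      have h := min_le_right s 1; rw [hαdef]; linarith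
    obtain ⟨γ, hγdef⟩ : ∃ γ : ℝ, γ = s - α := ⟨_, rfl⟩
    have hγ : 0 < γ := by rw [hγdef]; linarith
    have h1' : ∀ᶠ x in 𝓝[>] (-1:ℝ), U x ∈ Metric.closedBall (tau1 c₁) γ :=
      hlim (Metric.closedBall_mem_nhds _ hγ)
    rw [Filter.eventually_iff, mem_nhdsGT_iff_exists_Ioo_subset] at h1'
    obtain ⟨u, hu, hsub⟩ := h1'
    have hu' : (-1:ℝ) < u := mem_Ioi.mp hu
    obtain ⟨δ, hδdef⟩ : ∃ δ : ℝ, δ = min ((u+1)/2) (min (1/2) (γ/4)) := ⟨_, rfl⟩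
    have hδ0 : 0 < δ := by
      rw [hδdef]
      exact lt_min (by linarith) (lt_min (by norm_num) (by linarith))
    have hδu : δ ≤ (u+1)/2 := hδdef ▸ min_le_left _ _
    have hδhalf : δ ≤ 1/2 := hδdef ▸ le_trans (min_le_right _ _) (min_le_left _ _)
    have hδγ : δ ≤ γ/4 := hδdef ▸ le_trans (min_le_right _ _) (min_le_right _ _)
    obtain ⟨b, hbdef⟩ : ∃ b : ℝ, b = -1 + δ := ⟨_, rfl⟩
    have hb1 : b < 1 := by rw [hbdef]; linarith
    have hbu : b < u := by rw [hbdef]; linarith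
    have hbound : ∀ x ∈ Ioc (-1:ℝ) b, |U x - tau1 c₁| ≤ γ := by
      intro x hx
      have hxu : x ∈ Ioo (-1:ℝ) u := ⟨hx.1, lt_of_le_of_lt hx.2 hbu⟩
      have := hsub hxu
      simpa [Metric.mem_closedBall, Real.dist_eq] using this
    obtain ⟨K, hKdef⟩ : ∃ K : ℝ, K = |c₁| + |c₂| + 2*|c₃| + 2*|2 - 2*s| := ⟨_, rfl⟩
    have hK0 : 0 ≤ K := by rw [hKdef]; positivity
    have hδα : (0:ℝ) < δ ^ α := Real.rpow_pos_of_pos hδ0 α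
    have hδ1α : (0:ℝ) < δ ^ (1-α) := Real.rpow_pos_of_pos hδ0 (1-α)
    obtain ⟨C, hCdef⟩ : ∃ C : ℝ, C = K * δ^(1-α) / γ + γ / δ^α + 1 := ⟨_, rfl⟩
    have hC0 : 0 < C := by rw [hCdef]; positivity
    have hCkey : K * δ^(1-α) + γ ≤ γ * C := by
      have e2 : γ * (K * δ^(1-α) / γ) = K * δ^(1-α) := by
        field_simp
      have e1 : γ * C = γ * (K * δ^(1-α) / γ) + γ * (γ / δ^α) + γ := by
        rw [hCdef]; ring
      have e3 : 0 ≤ γ * (γ / δ^α) := by positivity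
      linarith
    have hCδ : γ < C * δ^α := by
      have e2 : γ / δ^α * δ^α = γ := div_mul_cancel₀ _ hδα.ne'
      have e1 : C * δ^α = K * δ^(1-α) / γ * δ^α + γ / δ^α * δ^α + δ^α := by
        rw [hCdef]; ring
      have e3 : 0 ≤ K * δ^(1-α) / γ * δ^α := by positivity
      linarith
    -- bounds valid for all x in Ioo (-1) b
    have hfacts : ∀ x ∈ Ioo (-1:ℝ) b,
        (0 < 1+x) ∧ (1+x ≤ δ) ∧ (0 < 1-x) ∧ (1-x ≤ 2) ∧
        (0 < (1+x)^α) ∧ ((1+x) ≤ δ^(1-α) * (1+x)^α) ∧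
        (-K ≤ c₂ - c₁ + c₃*(1-x) - 2*(tau1 c₁)) ∧
        (c₂ - c₁ + c₃*(1-x) - 2*(tau1 c₁) ≤ K) := by
      intro x hx
      have ht0 : 0 < 1+x := by linarith [hx.1]
      have htδ : 1+x ≤ δ := by
        have h := hx.2; rw [hbdef] at h; linarith
      have hu0 : 0 < 1-x := by linarith [hx.2.trans hb1]
      have hu2 : 1-x ≤ 2 := by linarith [hx.1]
      have hp0 : 0 < (1+x)^α := Real.rpow_pos_of_pos ht0 α
      have hsplit : 1+x = (1+x)^(1-α) * (1+x)^α := by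
        rw [← Real.rpow_add ht0, show (1-α)+α = (1:ℝ) by ring, Real.rpow_one]
      have hle : (1+x)^(1-α) ≤ δ^(1-α) :=
        Real.rpow_le_rpow ht0.le htδ (by linarith)
      have htsp : (1+x) ≤ δ^(1-α) * (1+x)^α := by
        calc (1+x) = (1+x)^(1-α) * (1+x)^α := hsplit
        _ ≤ δ^(1-α) * (1+x)^α := mul_le_mul_of_nonneg_right hle hp0.le
      have habs1x : |1-x| ≤ 2 := abs_le.mpr ⟨by linarith, hu2⟩
      have hc3ab : |c₃*(1-x)| ≤ 2*|c₃| := by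
        rw [abs_mul]
        calc |c₃| * |1-x| ≤ |c₃| * 2 := mul_le_mul_of_nonneg_left habs1x (abs_nonneg c₃)
        _ = 2*|c₃| := by ring
      have hc3a : c₃*(1-x) ≤ 2*|c₃| := (le_abs_self _).trans hc3ab
      have hc3b : -(2*|c₃|) ≤ c₃*(1-x) := by
        have := neg_abs_le (c₃*(1-x)); linarith
      have hLa : -K ≤ c₂ - c₁ + c₃*(1-x) - 2*(tau1 c₁) := by
        rw [htau, hKdef]
        have := le_abs_self c₁
        have := neg_abs_le c₂
        have := le_abs_self (2 - 2*s)
        have := neg_abs_le (2 - 2*s)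
        linarith
      have hLb : c₂ - c₁ + c₃*(1-x) - 2*(tau1 c₁) ≤ K := by
        rw [htau, hKdef]
        have := neg_abs_le c₁
        have := le_abs_self c₂
        have := le_abs_self (2 - 2*s)
        have := neg_abs_le (2 - 2*s)
        linarith
      exact ⟨ht0, htδ, hu0, hu2, hp0, htsp, hLa, hLb⟩
    -- algebraic identity
    have hE : ∀ x : ℝ,
        c₁*(1-x) + c₂*(1+x) + c₃*(1-x^2) - 2*x*U x - (1/2)*(U x)^2
        = (1+x)*(c₂ - c₁ + c₃*(1-x) - 2*(tau1 c₁))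
          + (2*s - 2*(1+x))*(U x - tau1 c₁) - (U x - tau1 c₁)^2/2 := by
      intro x
      rw [htau]
      linear_combination (-2) * hs2
    have hIoo : ∀ x ∈ Ioo (-1:ℝ) b, x ∈ Ioo (-1:ℝ) 1 :=
      fun x hx => ⟨hx.1, hx.2.trans hb1⟩
    have hφd : ∀ x ∈ Ioo (-1:ℝ) b,
        HasDerivAt (fun y => C*(1+y)^α) (C*(1*α*(1+x)^(α-1))) x := by
      intro x hx
      have ht0 : 0 < 1+x := (hfacts x hx).1
      exact HasDerivAt.const_mul C
        (((hasDerivAt_id x).const_add 1).rpow_const (Or.inl ht0.ne'))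
    have h2s : s = α + γ := by rw [hγdef]; ring
    have keyA : ∀ x ∈ Ioo (-1:ℝ) b, 0 ≤ U x - tau1 c₁ - C*(1+x)^α →
        ∃ d, 0 < d ∧ HasDerivAt (fun y => U y - tau1 c₁ - C*(1+y)^α) d x := by
      intro x hx hF
      obtain ⟨ht0, htδ, hu0, hu2, hp0, htsp, hLa, hLb⟩ := hfacts x hx
      have hU' := derivU c₁ c₂ c₃ U hU x (hIoo x hx)
      have hD := (hU'.sub_const (tau1 c₁)).sub (hφd x hx)
      refine ⟨_, ?_, hD⟩
      have hvγ : U x - tau1 c₁ ≤ γ := by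
        have h3 := hbound x ⟨hx.1, hx.2.le⟩
        have h4 := le_abs_self (U x - tau1 c₁); linarith
      have hvC : C*(1+x)^α ≤ U x - tau1 c₁ := by linarith
      have hv0 : 0 ≤ U x - tau1 c₁ :=
        le_trans (by positivity) hvC
      have hta : (1+x)^(α-1) = (1+x)^α / (1+x) := by
        rw [Real.rpow_sub ht0, Real.rpow_one]
      rw [hta]
      have heq : (c₁*(1-x) + c₂*(1+x) + c₃*(1-x^2) - 2*x*U x - (1/2)*(U x)^2)/((1+x)*(1-x))
          - C*(1*α*((1+x)^α/(1+x)))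
          = ((c₁*(1-x) + c₂*(1+x) + c₃*(1-x^2) - 2*x*U x - (1/2)*(U x)^2)
             - C*α*(1-x)*(1+x)^α)/((1+x)*(1-x)) := by
        field_simp
      rw [heq]
      apply div_pos ?_ (by positivity)
      rw [hE x]
      have s1 : -(δ^(1-α)*K*(1+x)^α) ≤ (1+x)*(c₂ - c₁ + c₃*(1-x) - 2*(tau1 c₁)) := by
        have A1 := mul_le_mul_of_nonneg_left hLa ht0.le
        have A2 := mul_le_mul_of_nonneg_right htsp hK0
        linarith only [A1, A2]
      have s2 : (2*α+γ)*(C*(1+x)^α)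
          ≤ (2*s - 2*(1+x))*(U x - tau1 c₁) - (U x - tau1 c₁)^2/2 := by
        have c0 : 0 ≤ 2*s - 2*(1+x) - (U x - tau1 c₁)/2 - (2*α+γ) := by
          rw [h2s]; linarith
        have P1 := mul_nonneg c0 hv0
        have P2 := mul_nonneg (by linarith [hα0, hγ] : (0:ℝ) ≤ 2*α+γ) (sub_nonneg.2 hvC)
        linarith only [P1, P2]
      have s3 : C*α*(1-x)*(1+x)^α ≤ 2*α*(C*(1+x)^α) := by
        have P := mul_nonneg (mul_nonneg (mul_nonneg hC0.le hα0.le) hp0.le)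
          (by linarith : (0:ℝ) ≤ 2-(1-x))
        linarith only [P]
      have s4 : (K*δ^(1-α)+γ)*(1+x)^α ≤ γ*C*(1+x)^α := by
        have P := mul_le_mul_of_nonneg_right hCkey hp0.le
        linarith only [P]
      linarith only [s1, s2, s3, s4, mul_pos hγ hp0]
    have keyB : ∀ x ∈ Ioo (-1:ℝ) b, 0 ≤ -(U x - tau1 c₁ + C*(1+x)^α) →
        ∃ d, 0 < d ∧ HasDerivAt (fun y => -(U y - tau1 c₁ + C*(1+y)^α)) d x := by
      intro x hx hF
      obtain ⟨ht0, htδ, hu0, hu2, hp0, htsp, hLa, hLb⟩ := hfacts x hx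
      have hU' := derivU c₁ c₂ c₃ U hU x (hIoo x hx)
      have hD := ((hU'.sub_const (tau1 c₁)).add (hφd x hx)).neg
      refine ⟨_, ?_, hD⟩
      have hvC : U x - tau1 c₁ ≤ -(C*(1+x)^α) := by linarith
      have hv0 : U x - tau1 c₁ ≤ 0 :=
        le_trans hvC (neg_nonpos.mpr (by positivity))
      have hta : (1+x)^(α-1) = (1+x)^α / (1+x) := by
        rw [Real.rpow_sub ht0, Real.rpow_one]
      rw [hta]
      have heq : -((c₁*(1-x) + c₂*(1+x) + c₃*(1-x^2) - 2*x*U x - (1/2)*(U x)^2)/((1+x)*(1-x))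
          + C*(1*α*((1+x)^α/(1+x))))
          = (-((c₁*(1-x) + c₂*(1+x) + c₃*(1-x^2) - 2*x*U x - (1/2)*(U x)^2)
             + C*α*(1-x)*(1+x)^α))/((1+x)*(1-x)) := by
        field_simp
      rw [heq]
      apply div_pos ?_ (by positivity)
      rw [hE x]
      have s1 : (1+x)*(c₂ - c₁ + c₃*(1-x) - 2*(tau1 c₁)) ≤ δ^(1-α)*K*(1+x)^α := by
        have A1 := mul_le_mul_of_nonneg_left hLb ht0.le
        have A2 := mul_le_mul_of_nonneg_right htsp hK0
        linarith only [A1, A2]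
      have s2 : (2*s - 2*(1+x))*(U x - tau1 c₁) - (U x - tau1 c₁)^2/2
          ≤ -((2*α+γ)*(C*(1+x)^α)) := by
        have c0 : 0 ≤ 2*s - 2*(1+x) - (2*α+γ) := by
          rw [h2s]; linarith
        have P1 := mul_nonneg c0 (by linarith : (0:ℝ) ≤ -(U x - tau1 c₁))
        have P2 := mul_nonneg (by linarith [hα0, hγ] : (0:ℝ) ≤ 2*α+γ)
            (by linarith : (0:ℝ) ≤ -(C*(1+x)^α) - (U x - tau1 c₁))
        have P3 := sq_nonneg (U x - tau1 c₁)
        linarith only [P1, P2, P3]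
      have s3 : C*α*(1-x)*(1+x)^α ≤ 2*α*(C*(1+x)^α) := by
        have P := mul_nonneg (mul_nonneg (mul_nonneg hC0.le hα0.le) hp0.le)
          (by linarith : (0:ℝ) ≤ 2-(1-x))
        linarith only [P]
      have s4 : (K*δ^(1-α)+γ)*(1+x)^α ≤ γ*C*(1+x)^α := by
        have P := mul_le_mul_of_nonneg_right hCkey hp0.le
        linarith only [P]
      linarith only [s1, s2, s3, s4, mul_pos hγ hp0]
    -- assembly
    refine ⟨δ, hδ0, C, hC0, ?_⟩
    intro x₀ hx₀
    have hx₀b : x₀ ∈ Ioo (-1:ℝ) b := by rw [hbdef]; exact hx₀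
    have hx₀lt : x₀ < b := hx₀b.2
    have hIcc : Icc x₀ b ⊆ Ioo (-1:ℝ) 1 :=
      fun y hy => ⟨lt_of_lt_of_le hx₀b.1 hy.1, lt_of_le_of_lt hy.2 hb1⟩
    have hcontU : ContinuousOn U (Icc x₀ b) := (hU.1.continuousOn).mono hIcc
    have hcontφ : ContinuousOn (fun y => C*(1+y)^α) (Icc x₀ b) := by
      apply continuousOn_const.mul
      apply ContinuousOn.rpow_const
      · exact (continuous_const.add continuous_id).continuousOn
      · intro y hy
        left
        have : -1 < y := lt_of_lt_of_le hx₀b.1 hy.1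
        exact ne_of_gt (by linarith)
    have hIco : ∀ y ∈ Ico x₀ b, y ∈ Ioo (-1:ℝ) b :=
      fun y hy => ⟨lt_of_lt_of_le hx₀b.1 hy.1, hy.2⟩
    have h1b : (1:ℝ)+b = δ := by rw [hbdef]; ring
    have hbmem : b ∈ Ioc (-1:ℝ) b := ⟨by rw [hbdef]; linarith, le_rfl⟩
    have hFb : U b - tau1 c₁ - C*(1+b)^α ≤ 0 := by
      have h3 := hbound b hbmem
      have h2 := le_abs_self (U b - tau1 c₁)
      rw [h1b]
      linarith [hCδ]
    have hup : U x₀ - tau1 c₁ - C*(1+x₀)^α ≤ 0 :=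
      noCross (fun y => U y - tau1 c₁ - C*(1+y)^α) x₀ b hx₀lt.le
        ((hcontU.sub continuousOn_const).sub hcontφ)
        (fun y hy hFy => keyA y (hIco y hy) hFy) hFb
    have hGb : -(U b - tau1 c₁ + C*(1+b)^α) ≤ 0 := by
      have h3 := hbound b hbmem
      have h2 := neg_abs_le (U b - tau1 c₁)
      rw [h1b]
      linarith [hCδ]
    have hlo : -(U x₀ - tau1 c₁ + C*(1+x₀)^α) ≤ 0 :=
      noCross (fun y => -(U y - tau1 c₁ + C*(1+y)^α)) x₀ b hx₀lt.le
        (((hcontU.sub continuousOn_const).add hcontφ).neg)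
        (fun y hy hFy => keyB y (hIco y hy) hFy) hGb
    rw [abs_le]
    exact ⟨by linarith, by linarith⟩
end
end
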